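/- Let t ≥ 2, K with 1 ≤ K ≤ t, a ≍ (N/K)^{1/2}, q ≥ 1, N ≥ 1, and τ ∈ ℝ. Then E(τ) := t^{-1/2} ∫_{aq/N}^1 ∫_1^2 min{(aq/(Nx))^{5/2}, |τ − Kv|^{-5/2}} dv dx ≪ (aq·t^ε/(NK√t)) · min{1, 100K/|τ|}, for any ε > 0. -/

import Mathlib

open Real MeasureTheory intervalIntegral

section ErrorTermHelpers

private lemma min_le_rpow_mul' {p q θ : ℝ} (hp : 0 ≤ p) (hq : 0 ≤ q) (hθ0 : 0 ≤ θ) (hθ1 : θ ≤ 1) :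
    min p q ≤ p ^ θ * q ^ (1 - θ) := by
  rcases eq_or_lt_of_le hp with hp0 | hp0
  · rcases eq_or_lt_of_le hθ0 with hθ' | hθ'
    · simpa [← hp0, ← hθ'] using min_le_right (0:ℝ) q
    · rw [← hp0, Real.zero_rpow (ne_of_gt hθ'), zero_mul]
      exact min_le_left 0 q
  rcases eq_or_lt_of_le hq with hq0 | hq0
  · rcases eq_or_lt_of_le hθ1 with hθ' | hθ'
    · simpa [← hq0, hθ'] using min_le_left p (0:ℝ)
    · rw [← hq0, Real.zero_rpow (by linarith : 1 - θ ≠ 0), mul_zero]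
      exact min_le_right p 0
  · have hmin : 0 < min p q := lt_min hp0 hq0
    calc min p q = (min p q) ^ θ * (min p q) ^ (1 - θ) := by
          rw [← Real.rpow_add hmin]; norm_num
      _ ≤ p ^ θ * q ^ (1 - θ) :=
          mul_le_mul (Real.rpow_le_rpow hmin.le (min_le_left p q) hθ0)
            (Real.rpow_le_rpow hmin.le (min_le_right p q) (by linarith))
            (Real.rpow_nonneg hmin.le _) (Real.rpow_nonneg hp _)

private lemma II_abs_rpow' {α : ℝ} (h1 : α < 1) (c d : ℝ) :
    IntervalIntegrable (fun u : ℝ => |u| ^ (-α)) volume c d := by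
  have key : ∀ b : ℝ, 0 ≤ b → IntervalIntegrable (fun u : ℝ => |u| ^ (-α)) volume 0 b := by
    intro b hb
    have h := intervalIntegrable_rpow' (a := 0) (b := b) (r := -α) (by linarith)
    rw [intervalIntegrable_iff] at h ⊢
    refine h.congr_fun ?_ measurableSet_uIoc
    intro u hu
    rw [Set.uIoc_of_le hb] at hu
    simp only [abs_of_pos hu.1]
  have keyneg : ∀ b : ℝ, 0 ≤ b → IntervalIntegrable (fun u : ℝ => |u| ^ (-α)) volume (-b) 0 := by
    intro b hb
    have h2 := (key b hb).comp_sub_left 0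
    simp only [zero_sub, abs_neg] at h2
    simpa using h2.symm
  have big : IntervalIntegrable (fun u : ℝ => |u| ^ (-α)) volume (-(max |c| |d|)) (max |c| |d|) :=
    (keyneg _ (le_max_of_le_left (abs_nonneg c))).trans (key _ (le_max_of_le_left (abs_nonneg c)))
  refine big.mono_set (Set.uIcc_subset_uIcc ?_ ?_) <;> rw [Set.mem_uIcc]
  · exact Or.inl ⟨le_trans (neg_le_neg (le_max_left _ _)) (neg_abs_le c),
      (le_abs_self c).trans (le_max_left _ _)⟩
  · exact Or.inl ⟨le_trans (neg_le_neg (le_max_right _ _)) (neg_abs_le d),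
      (le_abs_self d).trans (le_max_right _ _)⟩

private lemma II_shift' {α : ℝ} (h1 : α < 1) (s a b : ℝ) :
    IntervalIntegrable (fun v : ℝ => |s - v| ^ (-α)) volume a b := by
  have h := (II_abs_rpow' h1 (s - a) (s - b)).comp_sub_left s
  simpa using h

private lemma int_abs_rpow3' {α : ℝ} (h0 : 0 < α) (h1 : α < 1) :
    ∫ u in (-3:ℝ)..3, |u| ^ (-α) ≤ 6 / (1 - α) := by
  have hpos : (0:ℝ) < 1 - α := by linarith
  have hIl : IntervalIntegrable (fun u : ℝ => |u| ^ (-α)) volume (-3) 0 := II_abs_rpow' h1 _ _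
  have hIr : IntervalIntegrable (fun u : ℝ => |u| ^ (-α)) volume 0 3 := II_abs_rpow' h1 _ _
  have hval : ∫ u in (0:ℝ)..3, |u| ^ (-α) = 3 ^ (-α + 1) / (-α + 1) := by
    rw [intervalIntegral.integral_congr (g := fun u : ℝ => u ^ (-α)) ?_]
    · rw [integral_rpow (Or.inl (by linarith))]
      rw [Real.zero_rpow (by linarith : -α + 1 ≠ 0)]
      ring
    · intro u hu
      rw [Set.uIcc_of_le (by norm_num : (0:ℝ) ≤ 3)] at hu
      simp only [abs_of_nonneg hu.1]
  have hneg : ∫ u in (-3:ℝ)..0, |u| ^ (-α) = ∫ u in (0:ℝ)..3, |u| ^ (-α) := by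
    have := intervalIntegral.integral_comp_neg (a := (-3:ℝ)) (b := 0) (fun u : ℝ => |u| ^ (-α))
    simp only [abs_neg] at this
    rw [this, neg_zero, neg_neg]
  rw [← intervalIntegral.integral_add_adjacent_intervals hIl hIr, hneg, hval]
  rw [show -α + 1 = 1 - α by ring]
  have h3 : (3:ℝ) ^ (1 - α) ≤ 3 := by
    nth_rewrite 2 [show (3:ℝ) = 3 ^ (1:ℝ) by rw [Real.rpow_one]]
    exact Real.rpow_le_rpow_of_exponent_le (by norm_num) (by linarith)
  rw [← add_div, div_le_div_iff₀ hpos hpos]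
  nlinarith [Real.rpow_nonneg (by norm_num : (0:ℝ) ≤ 3) (1 - α)]

private lemma inner_abs_bound' {α : ℝ} (h0 : 0 < α) (h1 : α < 1) (s : ℝ) :
    ∫ v in (1:ℝ)..2, |s - v| ^ (-α) ≤ 6 / (1 - α) := by
  have hpos : (0:ℝ) < 1 - α := by linarith
  by_cases hs : -1 ≤ s ∧ s ≤ 4
  · have step1 : ∫ v in (1:ℝ)..2, |s - v| ^ (-α) ≤ ∫ v in (s-3)..(s+3), |s - v| ^ (-α) := by
      refine intervalIntegral.integral_mono_interval (by linarith [hs.1]) (by norm_num)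
        (by linarith [hs.2]) ?_ (II_shift' h1 s _ _)
      exact Filter.Eventually.of_forall fun v => Real.rpow_nonneg (abs_nonneg _) _
    have step2 : ∫ v in (s-3)..(s+3), |s - v| ^ (-α) = ∫ u in (-3:ℝ)..3, |u| ^ (-α) := by
      have := intervalIntegral.integral_comp_sub_left (a := s-3) (b := s+3)
        (fun u : ℝ => |u| ^ (-α)) s
      rw [this, show s - (s+3) = -3 by ring, show s - (s-3) = 3 by ring]
    calc ∫ v in (1:ℝ)..2, |s - v| ^ (-α)
        ≤ ∫ v in (s-3)..(s+3), |s - v| ^ (-α) := step1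
      _ = ∫ u in (-3:ℝ)..3, |u| ^ (-α) := step2
      _ ≤ 6 / (1 - α) := int_abs_rpow3' h0 h1
  · push_neg at hs
    have hb : ∀ v ∈ Set.Icc (1:ℝ) 2, |s - v| ^ (-α) ≤ 1 := by
      intro v hv
      refine Real.rpow_le_one_of_one_le_of_nonpos ?_ (by linarith)
      rcases lt_or_ge s (-1) with h | h
      · rw [abs_sub_comm, le_abs]; left; linarith [hv.1]
      · rw [le_abs]; left; linarith [hv.2, hs h]
    calc ∫ v in (1:ℝ)..2, |s - v| ^ (-α)
        ≤ ∫ _v in (1:ℝ)..2, (1:ℝ) := by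
          exact intervalIntegral.integral_mono_on (by norm_num) (II_shift' h1 s _ _)
            intervalIntegrable_const hb
      _ = 1 := by rw [intervalIntegral.integral_const]; norm_num
      _ ≤ 6 / (1 - α) := by rw [le_div_iff₀ hpos]; nlinarith

private lemma outer_int_le' {B p c : ℝ} (hp : 1 < p) (hB0 : 0 < B) (hc0 : 0 < c) (hc1 : c ≤ 1) :
    ∫ x in c..1, (B / x) ^ p ≤ B ^ p * c ^ (1 - p) / (p - 1) := by
  have hmem : (0:ℝ) ∉ Set.uIcc c 1 := by
    rw [Set.uIcc_of_le hc1]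
    intro h; exact absurd h.1 (not_le.mpr hc0)
  have hcongr : ∫ x in c..1, (B / x) ^ p = ∫ x in c..1, B ^ p * x ^ (-p) := by
    refine intervalIntegral.integral_congr ?_
    intro x hx
    rw [Set.uIcc_of_le hc1] at hx
    have hx0 : 0 < x := lt_of_lt_of_le hc0 hx.1
    simp only []
    rw [Real.div_rpow hB0.le hx0.le, Real.rpow_neg hx0.le, div_eq_mul_inv]
  rw [hcongr, intervalIntegral.integral_const_mul]
  have hint : ∫ x in c..1, x ^ (-p) = (1 - c ^ (-p + 1)) / (-p + 1) := by
    rw [integral_rpow (Or.inr ⟨by linarith, hmem⟩)]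
    rw [Real.one_rpow]
  rw [hint]
  have hp1 : (0:ℝ) < p - 1 := by linarith
  have hkey : (1 - c ^ (-p + 1)) / (-p + 1) ≤ c ^ (1 - p) / (p - 1) := by
    rw [show (-p+1) = -(p-1) by ring, div_neg, ← neg_div, neg_sub]
    rw [show -(p-1) = 1 - p by ring]
    gcongr
    linarith
  calc B ^ p * ((1 - c ^ (-p + 1)) / (-p + 1)) ≤ B ^ p * (c ^ (1-p) / (p-1)) :=
        mul_le_mul_of_nonneg_left hkey (Real.rpow_nonneg hB0.le _)
    _ = B ^ p * c ^ (1-p) / (p-1) := by rw [mul_div_assoc]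

private lemma outer_II' {B p c : ℝ} (hp : 0 ≤ p) (hc0 : 0 < c) (hc1 : c ≤ 1) :
    IntervalIntegrable (fun x : ℝ => (B / x) ^ p) volume c 1 := by
  apply ContinuousOn.intervalIntegrable
  refine ContinuousOn.rpow_const ?_ (fun x _ => Or.inr hp)
  exact continuousOn_const.div continuousOn_id (fun x hx => by
    rw [Set.uIcc_of_le hc1] at hx
    exact ne_of_gt (lt_of_lt_of_le hc0 hx.1))

end ErrorTermHelpers

set_option maxHeartbeats 2000000 in
/-- Error-term estimate for
`E(τ) = t^{-1/2} ∫_{aq/N}^1 ∫_1^2 min{(aq/(Nx))^{5/2}, |τ−Kv|^{-5/2}} dv dx`: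
`E(τ) ≪_ε (aq t^ε/(NK√t)) · min{1, 100K/|τ|}` for `a ≍ (N/K)^{1/2}`. -/
theorem error_term_E_tau_bound :
    ∀ ε > (0:ℝ), ∀ c₁ c₂ : ℝ, 0 < c₁ → c₁ ≤ c₂ → ∃ C > 0,
      ∀ t K N a q τ : ℝ, 2 ≤ t → 1 ≤ K → K ≤ t → 1 ≤ N → 1 ≤ q →
        c₁ * Real.sqrt (N / K) ≤ a → a ≤ c₂ * Real.sqrt (N / K) →
        t ^ (-(1/2 : ℝ)) *
          ∫ x in (a * q / N)..1, ∫ v in (1:ℝ)..2,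
            min ((a * q / (N * x)) ^ ((5:ℝ)/2)) (|τ - K * v| ^ (-(5:ℝ)/2)) ≤
        C * (a * q * t ^ ε / (N * K * Real.sqrt t)) *
          (if τ = 0 then 1 else min 1 (100 * K / |τ|)) := by
  intro ε hε c₁ c₂ hc₁ _hc₁₂
  set ε' : ℝ := min ε 1 / 2 with hε'def
  have hε'pos : 0 < ε' := div_pos (lt_min hε one_pos) two_pos
  have hε'le : ε' ≤ ε := by
    rw [hε'def]
    have : min ε 1 ≤ ε := min_le_left _ _
    linarith
  have hε'half : ε' ≤ 1/2 := by
    rw [hε'def]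
    have : min ε 1 ≤ 1 := min_le_right _ _
    linarith
  set α : ℝ := 1 - ε' with hαdef
  have hα0 : 0 < α := by rw [hαdef]; linarith
  have hα1 : α < 1 := by rw [hαdef]; linarith
  set p : ℝ := 5/2 - α with hpdef
  have hp1 : 1 < p := by rw [hpdef]; linarith
  have hC0 : (0:ℝ) < 24/ε' + 7 := by positivity
  refine ⟨24/ε' + 7, hC0, ?_⟩
  intro t K N a q τ ht hK hKt hN hq ha _
  have hN0 : (0:ℝ) < N := by linarith
  have hK0 : (0:ℝ) < K := by linarith
  have ht0 : (0:ℝ) < t := by linarith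
  have ht1 : (1:ℝ) ≤ t := by linarith
  have hq0 : (0:ℝ) < q := by linarith
  have hsq : 0 < Real.sqrt (N / K) := Real.sqrt_pos.mpr (by positivity)
  have ha0 : 0 < a := lt_of_lt_of_le (mul_pos hc₁ hsq) ha
  have hst0 : 0 < Real.sqrt t := Real.sqrt_pos.mpr ht0
  set B : ℝ := a * q / N with hBdef
  have hB0 : 0 < B := by rw [hBdef]; positivity
  have htpow : t ^ (-(1/2:ℝ)) = (Real.sqrt t)⁻¹ := by
    rw [Real.rpow_neg ht0.le, Real.sqrt_eq_rpow]
  set F : ℝ → ℝ := fun x => ∫ v in (1:ℝ)..2,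
      min ((a * q / (N * x)) ^ ((5:ℝ)/2)) (|τ - K * v| ^ (-(5:ℝ)/2)) with hFdef
  have hFnn : ∀ x : ℝ, 0 < x → 0 ≤ F x := by
    intro x hx
    exact intervalIntegral.integral_nonneg one_le_two fun v _ =>
      le_min (Real.rpow_nonneg (by positivity) _) (Real.rpow_nonneg (abs_nonneg _) _)
  have hfac0 : 0 ≤ (if τ = 0 then (1:ℝ) else min 1 (100*K/|τ|)) := by
    split
    · norm_num
    · exact le_min (by norm_num) (by positivity)
  have hQ0 : 0 ≤ a*q*t^ε/(N*K*Real.sqrt t) := by positivity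
  have hRHS0 : 0 ≤ (24/ε'+7) * (a*q*t^ε/(N*K*Real.sqrt t)) *
      (if τ = 0 then (1:ℝ) else min 1 (100*K/|τ|)) :=
    mul_nonneg (mul_nonneg hC0.le hQ0) hfac0
  rcases le_or_gt 1 B with hB1 | hB1
  · -- degenerate: B ≥ 1
    have hneg : (∫ x in B..1, F x) ≤ 0 := by
      rw [intervalIntegral.integral_symm]
      simp only [Left.neg_nonpos_iff]
      exact intervalIntegral.integral_nonneg hB1 fun x hx => hFnn x (by linarith [hx.1])
    calc t ^ (-(1/2:ℝ)) * ∫ x in B..1, F x ≤ t ^ (-(1/2:ℝ)) * 0 :=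
          mul_le_mul_of_nonneg_left hneg (Real.rpow_nonneg ht0.le _)
      _ = 0 := mul_zero _
      _ ≤ _ := hRHS0
  by_cases hFint : IntervalIntegrable F volume B 1
  case neg =>
    rw [intervalIntegral.integral_undef hFint, mul_zero]
    exact hRHS0
  -- main case
  rcases le_or_gt |τ| (200*K) with hτs | hτl
  · -- CASE 1 : |τ| ≤ 200 K
    have hInner : ∀ x ∈ Set.Icc B 1, F x ≤ (B/x) ^ p * (K ^ (-α) * (6/(1-α))) := by
      intro x hx
      have hx0 : 0 < x := lt_of_lt_of_le hB0 hx.1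
      have hBx : a*q/(N*x) = B/x := by rw [hBdef, div_div]
      have hmaj : IntervalIntegrable
          (fun v : ℝ => (B/x)^p * (K^(-α) * |τ/K - v|^(-α))) volume 1 2 :=
        ((II_shift' hα1 (τ/K) 1 2).const_mul _).const_mul _
      have hpt : ∀ v ∈ Set.Icc (1:ℝ) 2,
          min ((a*q/(N*x))^((5:ℝ)/2)) (|τ - K*v|^(-(5:ℝ)/2))
            ≤ (B/x)^p * (K^(-α) * |τ/K - v|^(-α)) := by
        intro v _
        rw [hBx]
        have h1 : min ((B/x)^((5:ℝ)/2)) (|τ - K*v|^(-(5:ℝ)/2))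
            ≤ ((B/x)^((5:ℝ)/2))^(1 - 2*α/5) * (|τ - K*v|^(-(5:ℝ)/2))^(1-(1-2*α/5)) :=
          min_le_rpow_mul' (Real.rpow_nonneg (by positivity) _)
            (Real.rpow_nonneg (abs_nonneg _) _) (by linarith) (by linarith)
        refine h1.trans (le_of_eq ?_)
        have e1 : ((B/x)^((5:ℝ)/2))^(1 - 2*α/5) = (B/x)^p := by
          rw [← Real.rpow_mul (by positivity : (0:ℝ) ≤ B/x)]
          congr 1
          rw [hpdef]; ring
        have e2 : (|τ - K*v|^(-(5:ℝ)/2))^(1-(1-2*α/5)) = K^(-α) * |τ/K - v|^(-α) := by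
          rw [← Real.rpow_mul (abs_nonneg _), show (-(5:ℝ)/2) * (1-(1-2*α/5)) = -α by ring]
          have hτKv : τ - K*v = K * (τ/K - v) := by field_simp
          rw [hτKv, abs_mul, abs_of_pos hK0, Real.mul_rpow hK0.le (abs_nonneg _)]
        rw [e1, e2]
      by_cases hi : IntervalIntegrable
          (fun v : ℝ => min ((a*q/(N*x))^((5:ℝ)/2)) (|τ - K*v|^(-(5:ℝ)/2))) volume 1 2
      · refine le_trans (intervalIntegral.integral_mono_on one_le_two hi hmaj hpt) ?_
        rw [intervalIntegral.integral_const_mul, intervalIntegral.integral_const_mul]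
        exact mul_le_mul_of_nonneg_left
          (mul_le_mul_of_nonneg_left (inner_abs_bound' hα0 hα1 _) (Real.rpow_nonneg hK0.le _))
          (Real.rpow_nonneg (by positivity) _)
      · show (∫ v in (1:ℝ)..2,
            min ((a*q/(N*x))^((5:ℝ)/2)) (|τ - K*v|^(-(5:ℝ)/2))) ≤ _
        rw [intervalIntegral.integral_undef hi]
        have h1α' : (1:ℝ) - α = ε' := by rw [hαdef]; ring
        exact mul_nonneg (Real.rpow_nonneg (by positivity) _)
          (mul_nonneg (Real.rpow_nonneg hK0.le _) (by rw [h1α']; positivity))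
    have hmajII : IntervalIntegrable (fun x : ℝ => (B/x)^p * (K^(-α)*(6/(1-α)))) volume B 1 :=
      (outer_II' (by linarith) hB0 hB1.le).mul_const _
    have houter := intervalIntegral.integral_mono_on hB1.le hFint hmajII hInner
    have key1 : (∫ x in B..1, F x) ≤ B * (K^(-α) * (12/ε')) := by
      refine houter.trans ?_
      rw [intervalIntegral.integral_mul_const]
      have houter3 : ∫ x in B..1, (B/x)^p ≤ B^p * B^(1-p)/(p-1) :=
        outer_int_le' hp1 hB0 hB0 hB1.le
      have hBp : B^p * B^(1-p) = B := by
        rw [← Real.rpow_add hB0, show p + (1-p) = 1 by ring, Real.rpow_one]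
      have h1α : 1 - α = ε' := by rw [hαdef]; ring
      have hp12 : (1:ℝ)/2 ≤ p - 1 := by rw [hpdef, hαdef]; linarith
      calc (∫ x in B..1, (B/x)^p) * (K^(-α)*(6/(1-α)))
          ≤ (B^p * B^(1-p)/(p-1)) * (K^(-α)*(6/(1-α))) :=
            mul_le_mul_of_nonneg_right houter3
              (mul_nonneg (Real.rpow_nonneg hK0.le _) (by rw [h1α]; positivity))
        _ = B * (K^(-α) * (6/ε' / (p-1))) := by rw [hBp, h1α]; ring
        _ ≤ B * (K^(-α) * (12/ε')) := by
            refine mul_le_mul_of_nonneg_left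
              (mul_le_mul_of_nonneg_left ?_ (Real.rpow_nonneg hK0.le _)) hB0.le
            rw [div_le_iff₀ (by linarith : (0:ℝ) < p - 1)]
            have h2 : 12/ε' * (1/2) ≤ 12/ε' * (p-1) :=
              mul_le_mul_of_nonneg_left hp12 (by positivity)
            have h3 : 12/ε' * (1/2) = 6/ε' := by ring
            linarith
    have hKα : K^(-α) = K^ε' * K⁻¹ := by
      rw [show -α = ε' + (-1) by rw [hαdef]; ring, Real.rpow_add hK0, Real.rpow_neg_one]
    have hKε : K ^ ε' ≤ t ^ ε :=
      le_trans (Real.rpow_le_rpow hK0.le hKt hε'pos.le)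
        (Real.rpow_le_rpow_of_exponent_le ht1 hε'le)
    have hfac : (1:ℝ)/2 ≤ (if τ = 0 then (1:ℝ) else min 1 (100*K/|τ|)) := by
      split
      case isTrue => norm_num
      case isFalse hτ0 =>
        refine le_min (by norm_num) ?_
        rw [le_div_iff₀ (abs_pos.mpr hτ0)]
        linarith
    have hX0 : (0:ℝ) ≤ t^ε * (B*(K⁻¹*(Real.sqrt t)⁻¹)) := by positivity
    have hRHSQ : a * q * t ^ ε / (N * K * Real.sqrt t) = t^ε * (B*(K⁻¹*(Real.sqrt t)⁻¹)) := by
      rw [hBdef]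
      field_simp
    calc t ^ (-(1/2:ℝ)) * ∫ x in B..1, F x
        ≤ t ^ (-(1/2:ℝ)) * (B * (K^(-α) * (12/ε'))) :=
          mul_le_mul_of_nonneg_left key1 (Real.rpow_nonneg ht0.le _)
      _ = (12/ε') * K^ε' * (B * (K⁻¹ * (Real.sqrt t)⁻¹)) := by rw [htpow, hKα]; ring
      _ ≤ ((24/ε'+7)/2 * t^ε) * (B * (K⁻¹ * (Real.sqrt t)⁻¹)) := by
          refine mul_le_mul_of_nonneg_right ?_ (by positivity)
          calc (12/ε') * K^ε' ≤ (12/ε') * t^ε :=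
                mul_le_mul_of_nonneg_left hKε (by positivity)
            _ ≤ ((24/ε'+7)/2) * t^ε := by
                refine mul_le_mul_of_nonneg_right ?_ (Real.rpow_nonneg ht0.le _)
                have h24 : 24/ε' = 2*(12/ε') := by ring
                linarith
      _ = (24/ε'+7) * (t^ε * (B*(K⁻¹*(Real.sqrt t)⁻¹))) * (1/2) := by ring
      _ ≤ (24/ε'+7) * (t^ε * (B*(K⁻¹*(Real.sqrt t)⁻¹))) *
            (if τ = 0 then (1:ℝ) else min 1 (100*K/|τ|)) :=
          mul_le_mul_of_nonneg_left hfac (mul_nonneg hC0.le hX0)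
      _ = _ := by rw [hRHSQ]
  · -- CASE 2 : |τ| > 200 K
    have hτ0 : τ ≠ 0 := by
      intro h
      rw [h, abs_zero] at hτl
      have h200 : (0:ℝ) < 200*K := by positivity
      linarith
    have hτpos : (0:ℝ) < |τ| := abs_pos.mpr hτ0
    have hτ200 : (200:ℝ) ≤ |τ| := by
      have h200 : (200:ℝ)*1 ≤ 200*K := by linarith
      linarith
    have hfaceq : (if τ = 0 then (1:ℝ) else min 1 (100*K/|τ|)) = 100*K/|τ| := by
      rw [if_neg hτ0, min_eq_right]
      rw [div_le_one hτpos]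
      linarith
    have hd : ∀ v ∈ Set.Icc (1:ℝ) 2, |τ|/2 ≤ |τ - K*v| := by
      intro v hv
      have h1 := abs_sub_abs_le_abs_sub τ (K*v)
      have h2 : |K*v| = K*v := abs_of_nonneg (mul_nonneg hK0.le (by linarith [hv.1]))
      have h3 : K*v ≤ 2*K := by
        have := mul_le_mul_of_nonneg_left hv.2 hK0.le
        linarith
      rw [h2] at h1
      linarith
    have hc2 : ∀ v ∈ Set.Icc (1:ℝ) 2, |τ - K*v|^(-(5:ℝ)/2) ≤ (|τ|/2)^(-(5:ℝ)/2) := fun v hv =>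
      Real.rpow_le_rpow_of_nonpos (by positivity) (hd v hv) (by norm_num)
    have hc2' : (|τ|/2)^(-(5:ℝ)/2) ≤ (2/|τ|) * (2/|τ|) := by
      have hy1 : (1:ℝ) ≤ |τ|/2 := by linarith
      calc (|τ|/2)^(-(5:ℝ)/2) ≤ (|τ|/2)^(-(2:ℝ)) :=
            Real.rpow_le_rpow_of_exponent_le hy1 (by norm_num)
        _ = (2/|τ|)*(2/|τ|) := by
            rw [show (-(2:ℝ)) = (-1) + (-1) by norm_num, Real.rpow_add (by linarith),
              Real.rpow_neg_one, inv_div]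
    have hFc2 : ∀ x : ℝ, 0 < x → F x ≤ (|τ|/2)^(-(5:ℝ)/2) := by
      intro x hx0
      by_cases hi : IntervalIntegrable
          (fun v : ℝ => min ((a*q/(N*x))^((5:ℝ)/2)) (|τ - K*v|^(-(5:ℝ)/2))) volume 1 2
      · refine le_trans (intervalIntegral.integral_mono_on one_le_two hi
          intervalIntegrable_const
          (fun v hv => le_trans (min_le_right _ _) (hc2 v hv))) ?_
        rw [intervalIntegral.integral_const, smul_eq_mul]
        norm_num
      · show (∫ v in (1:ℝ)..2,
            min ((a*q/(N*x))^((5:ℝ)/2)) (|τ - K*v|^(-(5:ℝ)/2))) ≤ _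
        rw [intervalIntegral.integral_undef hi]
        positivity
    have key : (∫ x in B..1, F x) ≤ 5*B/|τ| := by
      rcases le_or_gt 1 (B*|τ|) with hBτ | hBτ
      · -- 2a
        have h1 : (∫ x in B..1, F x) ≤ ∫ _x in B..1, (|τ|/2)^(-(5:ℝ)/2) :=
          intervalIntegral.integral_mono_on hB1.le hFint intervalIntegrable_const
            (fun x hx => hFc2 x (lt_of_lt_of_le hB0 hx.1))
        rw [intervalIntegral.integral_const, smul_eq_mul] at h1
        have h2 : (1-B) * (|τ|/2)^(-(5:ℝ)/2) ≤ 1 * ((2/|τ|)*(2/|τ|)) :=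
          mul_le_mul (by linarith) hc2' (Real.rpow_nonneg (by positivity) _) (by norm_num)
        have h3 : 2/|τ| ≤ 2*B := by
          rw [div_le_iff₀ hτpos]
          have : (2:ℝ)*1 ≤ 2*(B*|τ|) := by linarith
          linarith [this.trans_eq (by ring : 2*(B*|τ|) = 2*B*|τ|)]
        have h4 : (2/|τ|)*(2/|τ|) ≤ (2*B)*(2/|τ|) :=
          mul_le_mul_of_nonneg_right h3 (by positivity)
        have h5 : (2*B)*(2/|τ|) = 4*B/|τ| := by ring
        have h6 : 4*B/|τ| ≤ 5*B/|τ| := by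
          rw [div_le_div_iff_of_pos_right hτpos]
          linarith
        calc (∫ x in B..1, F x) ≤ (1-B) * (|τ|/2)^(-(5:ℝ)/2) := h1
          _ ≤ 1 * ((2/|τ|)*(2/|τ|)) := h2
          _ = (2/|τ|)*(2/|τ|) := one_mul _
          _ ≤ (2*B)*(2/|τ|) := h4
          _ = 4*B/|τ| := h5
          _ ≤ 5*B/|τ| := h6
      · -- 2b
        have hx'0 : 0 < B*|τ| := mul_pos hB0 hτpos
        have hx'B : B ≤ B*|τ| := by
          calc B = B*1 := (mul_one B).symm
            _ ≤ B*|τ| := mul_le_mul_of_nonneg_left (by linarith) hB0.le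
        have hx'1 : B*|τ| ≤ 1 := hBτ.le
        have hmem1 : B ∈ Set.uIcc B (1:ℝ) := Set.left_mem_uIcc
        have hmem2 : B*|τ| ∈ Set.uIcc B (1:ℝ) := by
          rw [Set.uIcc_of_le hB1.le]
          exact ⟨hx'B, hx'1⟩
        have hmem3 : (1:ℝ) ∈ Set.uIcc B (1:ℝ) := Set.right_mem_uIcc
        have hsub1 : IntervalIntegrable F volume B (B*|τ|) :=
          hFint.mono_set (Set.uIcc_subset_uIcc hmem1 hmem2)
        have hsub2 : IntervalIntegrable F volume (B*|τ|) 1 :=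
          hFint.mono_set (Set.uIcc_subset_uIcc hmem2 hmem3)
        have hsplit : (∫ x in B..1, F x)
            = (∫ x in B..(B*|τ|), F x) + ∫ x in (B*|τ|)..1, F x :=
          (intervalIntegral.integral_add_adjacent_intervals hsub1 hsub2).symm
        have hpiece1 : (∫ x in B..(B*|τ|), F x) ≤ 4*B/|τ| := by
          have h1 : (∫ x in B..(B*|τ|), F x) ≤ ∫ _x in B..(B*|τ|), (|τ|/2)^(-(5:ℝ)/2) :=
            intervalIntegral.integral_mono_on hx'B hsub1 intervalIntegrable_const
              (fun x hx => hFc2 x (lt_of_lt_of_le hB0 hx.1))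
          rw [intervalIntegral.integral_const, smul_eq_mul] at h1
          have h2 : (B*|τ| - B) * (|τ|/2)^(-(5:ℝ)/2) ≤ (B*|τ|) * ((2/|τ|)*(2/|τ|)) :=
            mul_le_mul (by linarith) hc2' (Real.rpow_nonneg (by positivity) _) hx'0.le
          have h3 : (B*|τ|) * ((2/|τ|)*(2/|τ|)) = 4*B/|τ| := by
            field_simp
            norm_num
          linarith
        have hpiece2 : (∫ x in (B*|τ|)..1, F x) ≤ B/|τ| := by
          have hpt2 : ∀ x ∈ Set.Icc (B*|τ|) 1, F x ≤ (B/x)^((5:ℝ)/2) := by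
            intro x hx
            have hx0 : 0 < x := lt_of_lt_of_le hx'0 hx.1
            have hBx : a*q/(N*x) = B/x := by rw [hBdef, div_div]
            by_cases hi : IntervalIntegrable
                (fun v : ℝ => min ((a*q/(N*x))^((5:ℝ)/2)) (|τ - K*v|^(-(5:ℝ)/2))) volume 1 2
            · refine le_trans (intervalIntegral.integral_mono_on one_le_two hi
                intervalIntegrable_const (g := fun _ => (B/x)^((5:ℝ)/2))
                (fun v _ => by rw [← hBx]; exact min_le_left _ _)) ?_
              rw [intervalIntegral.integral_const, smul_eq_mul]
              norm_num
            · show (∫ v in (1:ℝ)..2,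
                  min ((a*q/(N*x))^((5:ℝ)/2)) (|τ - K*v|^(-(5:ℝ)/2))) ≤ _
              rw [intervalIntegral.integral_undef hi]
              positivity
          have h2 := intervalIntegral.integral_mono_on hx'1 hsub2
            (outer_II' (by norm_num) hx'0 hx'1) hpt2
          have h3 : ∫ x in (B*|τ|)..1, (B/x)^((5:ℝ)/2)
              ≤ B^((5:ℝ)/2) * (B*|τ|)^(1-(5:ℝ)/2)/((5:ℝ)/2-1) :=
            outer_int_le' (by norm_num) hB0 hx'0 hx'1
          have e : B^((5:ℝ)/2) * (B*|τ|)^(1-(5:ℝ)/2) = B * |τ|^(-(3:ℝ)/2) := by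
            rw [show (1-(5:ℝ)/2) = -(3:ℝ)/2 by norm_num,
              Real.mul_rpow hB0.le (abs_nonneg τ), ← mul_assoc,
              ← Real.rpow_add hB0, show (5:ℝ)/2 + -(3:ℝ)/2 = 1 by norm_num, Real.rpow_one]
          have hτ32 : |τ|^(-(3:ℝ)/2) ≤ |τ|⁻¹ := by
            calc |τ|^(-(3:ℝ)/2) ≤ |τ|^(-(1:ℝ)) :=
                  Real.rpow_le_rpow_of_exponent_le (by linarith) (by norm_num)
              _ = |τ|⁻¹ := Real.rpow_neg_one _
          have h4 : B^((5:ℝ)/2) * (B*|τ|)^(1-(5:ℝ)/2)/((5:ℝ)/2-1) ≤ B * |τ|⁻¹ := by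
            rw [e, show (5:ℝ)/2-1 = 3/2 by norm_num]
            have hX : (0:ℝ) ≤ B * |τ|^(-(3:ℝ)/2) :=
              mul_nonneg hB0.le (Real.rpow_nonneg (abs_nonneg _) _)
            calc B * |τ|^(-(3:ℝ)/2) / (3/2) ≤ B * |τ|^(-(3:ℝ)/2) := by
                  rw [div_le_iff₀ (by norm_num : (0:ℝ) < 3/2)]
                  linarith
              _ ≤ B * |τ|⁻¹ := mul_le_mul_of_nonneg_left hτ32 hB0.le
          have h5 : B * |τ|⁻¹ = B/|τ| := (div_eq_mul_inv B _).symm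
          linarith
        rw [hsplit]
        have h6 : 4*B/|τ| + B/|τ| = 5*B/|τ| := by ring
        linarith
    -- final assembly for case 2
    have hrhs_eq : (24/ε'+7) * (a*q*t^ε/(N*K*Real.sqrt t)) * (100*K/|τ|)
        = ((24/ε'+7)*100*t^ε) * (B/(Real.sqrt t * |τ|)) := by
      rw [hBdef]
      field_simp
    have htε1 : (1:ℝ) ≤ t^ε := Real.one_le_rpow ht1 hε.le
    have h5 : (5:ℝ) ≤ (24/ε'+7)*100*t^ε := by
      have hA : (0:ℝ) ≤ (24/ε'+7)*100 := by positivity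
      have hmul := mul_le_mul_of_nonneg_left htε1 hA
      have h700 : (5:ℝ) ≤ (24/ε'+7)*100 := by
        have : (0:ℝ) < 24/ε' := by positivity
        linarith
      calc (5:ℝ) ≤ (24/ε'+7)*100 := h700
        _ = (24/ε'+7)*100*1 := (mul_one _).symm
        _ ≤ (24/ε'+7)*100*t^ε := hmul
    calc t^(-(1/2:ℝ)) * ∫ x in B..1, F x
        ≤ t^(-(1/2:ℝ)) * (5*B/|τ|) :=
          mul_le_mul_of_nonneg_left key (Real.rpow_nonneg ht0.le _)
      _ = 5 * (B/(Real.sqrt t * |τ|)) := by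
          rw [htpow]
          field_simp
      _ ≤ ((24/ε'+7)*100*t^ε) * (B/(Real.sqrt t * |τ|)) :=
          mul_le_mul_of_nonneg_right h5 (by positivity)
      _ = _ := by rw [hfaceq, hrhs_eq]
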